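/- Let E, F, G, L, M₁, M₂, N and δ₁₁, δ₁₂, δ₂₁, δ₂₂ be real numbers such that the matrix S = [[E, F], [F, G]] is positive definite. Set A = [[L, M₁], [M₂, N]]·adj(Δᵀ) where Δ = [[δ₁₁, δ₁₂], [δ₂₁, δ₂₂]], and define 𝒦(b) = (bᵀAb)/(bᵀSb) on ℝ²∖{0}. Put 𝓜 = δ₁₁M₁ − δ₂₁L + δ₂₂M₂ − δ₁₂N, C₁ = 2F(δ₂₂L − δ₁₂M₁) − E𝓜, C₂ = 2G(δ₂₂L − δ₁₂M₁) − 2E(δ₁₁N − δ₂₁M₂), and C₃ = G𝓜 − 2F(δ₁₁N − δ₂₁M₂). Then b = (b₁, b₂) ≠ 0 is a critical point of 𝒦 if and only if C₁b₁² + C₂b₁b₂ + C₃b₂² = 0. -/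

import Mathlib

open Matrix

lemma hasFDerivAt_quad (a s c : ℝ) (x : Fin 2 → ℝ) :
    HasFDerivAt (fun y : Fin 2 → ℝ => a * (y 0 * y 0) + s * (y 0 * y 1) + c * (y 1 * y 1))
      ((2*a*x 0 + s*x 1) • (ContinuousLinearMap.proj 0 : (Fin 2 → ℝ) →L[ℝ] ℝ)
        + (s*x 0 + 2*c*x 1) • (ContinuousLinearMap.proj 1 : (Fin 2 → ℝ) →L[ℝ] ℝ)) x := by
  have h0 := hasFDerivAt_apply (𝕜 := ℝ) (F' := fun _ : Fin 2 => ℝ) 0 x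
  have h1 := hasFDerivAt_apply (𝕜 := ℝ) (F' := fun _ : Fin 2 => ℝ) 1 x
  have H := (((h0.mul h0).const_mul a).add (((h0.mul h1).const_mul s))).add
    ((h1.mul h1).const_mul c)
  have hD : (a • (x 0 • (ContinuousLinearMap.proj 0 : (Fin 2 → ℝ) →L[ℝ] ℝ)
        + x 0 • ContinuousLinearMap.proj 0) +
      s • (x 0 • (ContinuousLinearMap.proj 1 : (Fin 2 → ℝ) →L[ℝ] ℝ)
        + x 1 • ContinuousLinearMap.proj 0) +
      c • (x 1 • (ContinuousLinearMap.proj 1 : (Fin 2 → ℝ) →L[ℝ] ℝ)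
        + x 1 • ContinuousLinearMap.proj 1))
      = (2*a*x 0 + s*x 1) • (ContinuousLinearMap.proj 0 : (Fin 2 → ℝ) →L[ℝ] ℝ)
        + (s*x 0 + 2*c*x 1) • ContinuousLinearMap.proj 1 := by
    ext v
    simp only [ContinuousLinearMap.add_apply, ContinuousLinearMap.smul_apply,
      ContinuousLinearMap.proj_apply, smul_eq_mul]
    ring
  exact hD ▸ H

lemma combo_eq_zero_iff (c0 c1 : ℝ) :
    c0 • (ContinuousLinearMap.proj 0 : (Fin 2 → ℝ) →L[ℝ] ℝ)
      + c1 • ContinuousLinearMap.proj 1 = 0 ↔ c0 = 0 ∧ c1 = 0 := by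
  constructor
  · intro h
    constructor
    · have := congrArg (fun T : (Fin 2 → ℝ) →L[ℝ] ℝ => T (Pi.single 0 1)) h
      simpa using this
    · have := congrArg (fun T : (Fin 2 → ℝ) →L[ℝ] ℝ => T (Pi.single 1 1)) h
      simpa using this
  · rintro ⟨h0, h1⟩
    ext v
    simp [h0, h1]

/-- the critical points of the Ω-Kummer curvature function are
exactly the solutions of the equation of principal surfaces
`C₁b₁² + C₂b₁b₂ + C₃b₂² = 0`. -/
theorem stmt_7 (E F G L M₁ M₂ N δ₁₁ δ₁₂ δ₂₁ δ₂₂ : ℝ)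
    (hS : (!![E, F; F, G]).PosDef)
    (Δ A : Matrix (Fin 2) (Fin 2) ℝ)
    (hΔ : Δ = !![δ₁₁, δ₁₂; δ₂₁, δ₂₂])
    (hA : A = !![L, M₁; M₂, N] * (Δᵀ).adjugate)
    (𝒦 : (Fin 2 → ℝ) → ℝ)
    (h𝒦 : ∀ b, 𝒦 b = (b ⬝ᵥ A.mulVec b) / (b ⬝ᵥ (!![E, F; F, G]).mulVec b))
    (𝓜 C₁ C₂ C₃ : ℝ)
    (h𝓜 : 𝓜 = δ₁₁ * M₁ - δ₂₁ * L + δ₂₂ * M₂ - δ₁₂ * N)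
    (hC₁ : C₁ = 2 * F * (δ₂₂ * L - δ₁₂ * M₁) - E * 𝓜)
    (hC₂ : C₂ = 2 * G * (δ₂₂ * L - δ₁₂ * M₁) - 2 * E * (δ₁₁ * N - δ₂₁ * M₂))
    (hC₃ : C₃ = G * 𝓜 - 2 * F * (δ₁₁ * N - δ₂₁ * M₂))
    (b : Fin 2 → ℝ) (hb : b ≠ 0) :
    fderiv ℝ 𝒦 b = 0 ↔
      C₁ * (b 0) ^ 2 + C₂ * (b 0) * (b 1) + C₃ * (b 1) ^ 2 = 0 := by
  -- explicit entries of A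
  have hT : (!![δ₁₁, δ₁₂; δ₂₁, δ₂₂])ᵀ = !![δ₁₁, δ₂₁; δ₁₂, δ₂₂] := by
    ext i j; fin_cases i <;> fin_cases j <;> rfl
  have hA' : A = !![L * δ₂₂ - M₁ * δ₁₂, -(L * δ₂₁) + M₁ * δ₁₁;
                    M₂ * δ₂₂ - N * δ₁₂, -(M₂ * δ₂₁) + N * δ₁₁] := by
    rw [hA, hΔ, hT, Matrix.adjugate_fin_two_of, Matrix.mul_fin_two]
    congr 1 <;> ring_nf
  -- the numerator and denominator as explicit quadratics
  set a₀ : ℝ := L * δ₂₂ - M₁ * δ₁₂ with ha₀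
  set a₁ : ℝ := (-(L * δ₂₁) + M₁ * δ₁₁) + (M₂ * δ₂₂ - N * δ₁₂) with ha₁
  set a₂ : ℝ := -(M₂ * δ₂₁) + N * δ₁₁ with ha₂
  set pf : (Fin 2 → ℝ) → ℝ := fun y => a₀ * (y 0 * y 0) + a₁ * (y 0 * y 1) + a₂ * (y 1 * y 1)
    with hpf
  set qf : (Fin 2 → ℝ) → ℝ := fun y => E * (y 0 * y 0) + (2*F) * (y 0 * y 1) + G * (y 1 * y 1)
    with hqf
  have hqeq : ∀ y : Fin 2 → ℝ, y ⬝ᵥ (!![E, F; F, G]).mulVec y = qf y := by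
    intro y
    simp [Matrix.mulVec, dotProduct, Fin.sum_univ_two, hqf]
    ring
  have hpeq : ∀ y : Fin 2 → ℝ, y ⬝ᵥ A.mulVec y = pf y := by
    intro y
    rw [hA']
    simp [Matrix.mulVec, dotProduct, Fin.sum_univ_two, hpf]
    ring
  have hK : 𝒦 = fun y => pf y * (qf y)⁻¹ := by
    funext y
    rw [h𝒦, hpeq, hqeq, div_eq_mul_inv]
  -- positivity of the denominator
  have hq0 : qf b ≠ 0 := by
    have h := hS.dotProduct_mulVec_pos hb
    rw [star_trivial] at h
    rw [hqeq b] at h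
    exact ne_of_gt h
  have hq2 : (qf b) ^ 2 ≠ 0 := pow_ne_zero 2 hq0
  -- derivatives
  have Hp := hasFDerivAt_quad a₀ a₁ a₂ b
  have Hq := hasFDerivAt_quad E (2*F) G b
  have Hinv := (hasFDerivAt_inv hq0).comp b Hq
  have HK := Hp.mul Hinv
  set dp0 : ℝ := 2*a₀*b 0 + a₁*b 1 with hdp0
  set dp1 : ℝ := a₁*b 0 + 2*a₂*b 1 with hdp1
  set dq0 : ℝ := 2*E*b 0 + (2*F)*b 1 with hdq0
  set dq1 : ℝ := (2*F)*b 0 + 2*G*b 1 with hdq1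
  set g0 : ℝ := (qf b * dp0 - pf b * dq0) / (qf b) ^ 2 with hg0
  set g1 : ℝ := (qf b * dp1 - pf b * dq1) / (qf b) ^ 2 with hg1
  have HD : (pf b • ((ContinuousLinearMap.smulRight (1 : ℝ →L[ℝ] ℝ) (-(qf b ^ 2)⁻¹)).comp
        (dq0 • (ContinuousLinearMap.proj 0 : (Fin 2 → ℝ) →L[ℝ] ℝ)
          + dq1 • ContinuousLinearMap.proj 1))
      + (qf b)⁻¹ • (dp0 • (ContinuousLinearMap.proj 0 : (Fin 2 → ℝ) →L[ℝ] ℝ)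
          + dp1 • ContinuousLinearMap.proj 1))
      = g0 • (ContinuousLinearMap.proj 0 : (Fin 2 → ℝ) →L[ℝ] ℝ)
        + g1 • ContinuousLinearMap.proj 1 := by
    ext v
    simp only [ContinuousLinearMap.add_apply, ContinuousLinearMap.smul_apply,
      ContinuousLinearMap.comp_apply, ContinuousLinearMap.smulRight_apply,
      ContinuousLinearMap.one_apply, ContinuousLinearMap.proj_apply, smul_eq_mul,
      hg0, hg1]
    field_simp
    ring
  have hfd : fderiv ℝ 𝒦 b
      = g0 • (ContinuousLinearMap.proj 0 : (Fin 2 → ℝ) →L[ℝ] ℝ)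
        + g1 • ContinuousLinearMap.proj 1 := by
    rw [hK]
    exact (HD ▸ HK).fderiv
  rw [hfd, combo_eq_zero_iff]
  -- scalar reductions
  set quad : ℝ := C₁ * (b 0) ^ 2 + C₂ * (b 0) * (b 1) + C₃ * (b 1) ^ 2 with hquad
  have id0 : qf b * dp0 - pf b * dq0 = b 1 * quad := by
    rw [hquad, hC₁, hC₂, hC₃, h𝓜, hqf, hpf, hdp0, hdq0, ha₀, ha₁, ha₂]
    ring
  have id1 : qf b * dp1 - pf b * dq1 = -(b 0 * quad) := by
    rw [hquad, hC₁, hC₂, hC₃, h𝓜, hqf, hpf, hdp1, hdq1, ha₀, ha₁, ha₂]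
    ring
  have hbi : b 0 ≠ 0 ∨ b 1 ≠ 0 := by
    by_contra h
    push_neg at h
    exact hb (funext fun i => by fin_cases i <;> simp [h.1, h.2])
  constructor
  · rintro ⟨e0, e1⟩
    rw [hg0, div_eq_zero_iff] at e0
    rw [hg1, div_eq_zero_iff] at e1
    have e0' : b 1 * quad = 0 := by
      rw [← id0]; exact e0.resolve_right hq2
    have e1' : b 0 * quad = 0 := by
      have := e1.resolve_right hq2
      rw [id1] at this
      linarith [this]
    rcases hbi with h | h
    · exact (mul_eq_zero.1 e1').resolve_left h
    · exact (mul_eq_zero.1 e0').resolve_left h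
  · intro h
    constructor
    · rw [hg0, id0, h, mul_zero, zero_div]
    · rw [hg1, id1, h, mul_zero, neg_zero, zero_div]
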